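/- The map r : X → X[m,n] defined on generators by r(R_{ij}) = R_{ij} if m ≤ i < j ≤ n and r(R_{ij}) = 0 otherwise is a retraction of differential graded algebras (a DGA map restricting to the identity on X[m,n]); consequently the induced map HX[m,n] → HX in homology is injective. -/
import Mathlib


set_option synthInstance.maxHeartbeats 1000000
set_option maxHeartbeats 1000000

open MvPolynomial Finset

/-- Index type for the generators `R_{ij}`, `m ≤ i < j ≤ n`, of `X[m,n]`. -/
abbrev SigmaXmn (m n : ℕ) : Type := {p : ℕ × ℕ // m ≤ p.1 ∧ p.1 < p.2 ∧ p.2 ≤ n}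

/-- The polynomial algebra `X[m,n] = F₂[R_{ij} : m ≤ i < j ≤ n]`. -/
abbrev XmnAlg (m n : ℕ) : Type := MvPolynomial (SigmaXmn m n) (ZMod 2)

/-- The generator `R_{ij}` of `X[m,n]` (zero outside the allowed index range). -/
noncomputable def RgenMN (m n i j : ℕ) : XmnAlg m n :=
  if h : m ≤ i ∧ i < j ∧ j ≤ n then X ⟨(i, j), h⟩ else 0

/-- The differential of `X[m,n]`: `d R_{ij} = ∑_{i<k<j} R_{ik} R_{kj}`, extended as a
derivation. -/
noncomputable def dXmn (m n : ℕ) : Derivation (ZMod 2) (XmnAlg m n) (XmnAlg m n) :=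
  mkDerivation (ZMod 2)
    (fun p : SigmaXmn m n =>
      ∑ k ∈ Finset.Ioo p.1.1 p.1.2, RgenMN m n p.1.1 k * RgenMN m n k p.1.2)

/-- Index type for the generators `R_{ij}`, `0 ≤ i < j`, of the full algebra `X`. -/
abbrev SigmaX : Type := {p : ℕ × ℕ // p.1 < p.2}

/-- The polynomial algebra `X = F₂[R_{ij} : 0 ≤ i < j]`. -/
abbrev Xalg : Type := MvPolynomial SigmaX (ZMod 2)

/-- The generator `R_{ij}` of `X`. -/
noncomputable def Rgen (i j : ℕ) : Xalg :=
  if h : i < j then X ⟨(i, j), h⟩ else 0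

/-- The differential of `X`. -/
noncomputable def dX : Derivation (ZMod 2) Xalg Xalg :=
  mkDerivation (ZMod 2)
    (fun p : SigmaX => ∑ k ∈ Finset.Ioo p.1.1 p.1.2, Rgen p.1.1 k * Rgen k p.1.2)

/-- The inclusion `X[m,n] → X`. -/
noncomputable def inclMN (m n : ℕ) : XmnAlg m n →ₐ[ZMod 2] Xalg :=
  rename (fun p : SigmaXmn m n => (⟨p.1, p.2.2.1⟩ : SigmaX))

/-- The retraction `r : X → X[m,n]`, `R_{ij} ↦ R_{ij}` if `m ≤ i < j ≤ n` and `R_{ij} ↦ 0`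
otherwise. -/
noncomputable def retrMN (m n : ℕ) : Xalg →ₐ[ZMod 2] XmnAlg m n :=
  aeval (fun p : SigmaX => RgenMN m n p.1.1 p.1.2)

lemma retr_Rgen (m n i j : ℕ) : retrMN m n (Rgen i j) = RgenMN m n i j := by
  rw [Rgen]
  by_cases h : i < j
  · rw [dif_pos h, retrMN, aeval_X]
  · rw [dif_neg h, map_zero, RgenMN, dif_neg (fun h' => h h'.2.1)]

lemma dXmn_RgenMN (m n i j : ℕ) (hij : i < j) :
    dXmn m n (RgenMN m n i j) = ∑ k ∈ Finset.Ioo i j, RgenMN m n i k * RgenMN m n k j := by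
  rw [RgenMN]
  by_cases h : m ≤ i ∧ i < j ∧ j ≤ n
  · rw [dif_pos h, dXmn, mkDerivation_X]
  · rw [dif_neg h, map_zero]
    symm
    apply Finset.sum_eq_zero
    intro k hk
    rcases (by tauto : ¬ m ≤ i ∨ ¬ j ≤ n) with h' | h'
    · rw [show RgenMN m n i k = 0 from dif_neg fun hc => h' hc.1, zero_mul]
    · rw [show RgenMN m n k j = 0 from dif_neg fun hc => h' hc.2.2, mul_zero]

lemma core (m n : ℕ) (s : SigmaX) :
    dXmn m n (retrMN m n (X s)) = retrMN m n (dX (X s)) := by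
  have h1 : retrMN m n (X s) = RgenMN m n s.1.1 s.1.2 := aeval_X _ _
  rw [h1, dXmn_RgenMN m n _ _ s.2, dX, mkDerivation_X, map_sum]
  exact Finset.sum_congr rfl fun k _ => by rw [map_mul, retr_Rgen, retr_Rgen]

lemma dcomm (m n : ℕ) (x : Xalg) : dXmn m n (retrMN m n x) = retrMN m n (dX x) := by
  induction x using MvPolynomial.induction_on with
  | C a =>
    rw [show (C a : Xalg) = algebraMap (ZMod 2) Xalg a from rfl, AlgHom.commutes,
      Derivation.map_algebraMap, Derivation.map_algebraMap, map_zero]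
  | add p q hp hq => rw [map_add, map_add, map_add, map_add, hp, hq]
  | mul_X p s hp =>
    rw [map_mul, Derivation.leibniz, Derivation.leibniz, map_add]
    simp only [smul_eq_mul, map_mul]
    rw [hp, core]


/-- `r` is a retraction of differential graded algebras: it restricts to the identity on
`X[m,n]` and commutes with the differentials; consequently the induced map
`HX[m,n] → HX` in homology is injective. -/
theorem retrMN_is_dga_retraction (m n : ℕ) :
    (∀ y : XmnAlg m n, retrMN m n (inclMN m n y) = y) ∧
    (∀ x : Xalg, dXmn m n (retrMN m n x) = retrMN m n (dX x)) ∧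
    (∀ y : XmnAlg m n, dXmn m n y = 0 → (∃ x : Xalg, dX x = inclMN m n y) →
      ∃ z : XmnAlg m n, dXmn m n z = y) := by
  have hret : ∀ y : XmnAlg m n, retrMN m n (inclMN m n y) = y := by
    intro y
    have : (retrMN m n).comp (inclMN m n) = AlgHom.id (ZMod 2) (XmnAlg m n) := by
      apply MvPolynomial.algHom_ext
      intro p
      simp only [AlgHom.comp_apply, inclMN, rename_X, retrMN, aeval_X, AlgHom.id_apply]
      rw [RgenMN, dif_pos p.2]
    calc retrMN m n (inclMN m n y) = ((retrMN m n).comp (inclMN m n)) y := rfl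
      _ = y := by rw [this]; rfl
  refine ⟨hret, dcomm m n, ?_⟩
  rintro y hdy ⟨x, hx⟩
  exact ⟨retrMN m n x, by rw [dcomm, hx, hret]⟩
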